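/- Let A be a locally noetherian Grothendieck category in which every nonzero object has an associated point. Then the assignments C ↦ Supp(C) := ⋃_{M ∈ C} Supp(M) and S ↦ Supp⁻¹(S) := {M ∈ A_fg : Supp(M) ⊆ S} are mutually inverse bijections between the Serre subcategories of A_fg and the specialization closed subsets of 𝔖pec(A); concretely: (i) for every Serre subcategory C of A_fg, Supp(C) is specialization closed and Supp⁻¹(Supp(C)) = C, and (ii) for every specialization closed subset S of 𝔖pec(A), Supp⁻¹(S) is a Serre subcategory of A_fg and Supp(Supp⁻¹(S)) = S. -/

import Mathlib

/-!
Common set-up: Rosenberg's spectrum of an abelian category.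

For objects `X Y` of an abelian category `C`, `X ≺ Y` means that `X` is a subquotient of a
finite direct sum of copies of `Y`; `X ≈ Y` means `X ≺ Y ≺ X`.  A nonzero object `P` is
*spectral* if it is `≈`-equivalent to each of its nonzero subobjects, and the spectrum
`𝔖pec(C)` is the collection of `≈`-equivalence classes `⟨P⟩` of spectral objects.
`Supp(M) = {⟨P⟩ : P ≺ M}` and `Ass(M) = {⟨P⟩ : some spectral object of class ⟨P⟩ embeds in M}`.
-/

open CategoryTheory CategoryTheory.Limits

attribute [local instance] CategoryTheory.Abelian.hasFiniteBiproducts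
attribute [local instance] CategoryTheory.Limits.hasBinaryBiproducts_of_finite_biproducts

universe v u

namespace RosenbergSpec

variable (C : Type u) [Category.{v} C] [Abelian C]

/-- `X ≺ Y` : `X` is a subquotient of a finite direct sum of copies of `Y`. -/
def Prec (X Y : C) : Prop :=
  ∃ n : ℕ, 0 < n ∧ ∃ (S : C) (ι : S ⟶ ⨁ (fun _ : Fin n => Y)) (π : S ⟶ X),
    Mono ι ∧ Epi π

/-- `X ≈ Y` : mutual subquotient equivalence. -/
def PrecEquiv (X Y : C) : Prop := Prec C X Y ∧ Prec C Y X

/-- A nonzero object is spectral if it is `≈`-equivalent to each of its nonzero subobjects. -/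
def IsSpectral (P : C) : Prop :=
  ¬ IsZero P ∧ ∀ (Q : C) (f : Q ⟶ P), Mono f → ¬ IsZero Q → PrecEquiv C Q P

/-- The type of spectral objects of `C`. -/
def SpectralObj := {P : C // IsSpectral C P}

/-- The spectrum `𝔖pec(C)` : equivalence classes `⟨P⟩` of spectral objects. -/
def SpecPoint := Quot (fun P Q : SpectralObj C => PrecEquiv C P.1 Q.1)

/-- The point `⟨P⟩` of the spectrum attached to a spectral object `P`. -/
def pt (P : SpectralObj C) : SpecPoint C := Quot.mk _ P

/-- `Supp(M) = {⟨P⟩ : P spectral, P ≺ M}`. -/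
def supp (M : C) : Set (SpecPoint C) :=
  {x | ∃ P : SpectralObj C, pt C P = x ∧ Prec C P.1 M}

/-- `Ass(M) = {⟨P⟩ : some spectral object of class ⟨P⟩ is a subobject of M}`. -/
def ass (M : C) : Set (SpecPoint C) :=
  {x | ∃ P : SpectralObj C, pt C P = x ∧ ∃ f : P.1 ⟶ M, Mono f}

/-- A subset of the spectrum is specialization closed if together with any point `⟨P⟩`
it contains all of `Supp(P)`. -/
def SpecializationClosed (S : Set (SpecPoint C)) : Prop :=
  ∀ P : SpectralObj C, pt C P ∈ S → supp C P.1 ⊆ S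

/-- Every nonzero object of `C` has an associated point. -/
def HasAssociatedPoints : Prop :=
  ∀ M : C, ¬ IsZero M → (ass C M).Nonempty

/-- A Grothendieck category is locally noetherian if it admits a small generating family
of noetherian objects. -/
def LocallyNoetherian : Prop :=
  ∃ (ι : Type v) (G : ι → C), ObjectProperty.IsSeparating (Set.range G) ∧ ∀ i, IsNoetherianObject (G i)

/-- `0 ⟶ X ⟶ M ⟶ Y ⟶ 0` is a short exact sequence. -/
def IsShortExact {X M Y : C} (f : X ⟶ M) (g : M ⟶ Y) : Prop :=
  ∃ w : f ≫ g = 0, (ShortComplex.mk f g w).ShortExact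

/-- `f : N ⟶ M` exhibits `N` as an essential subobject of `M`. -/
def IsEssential {N M : C} (f : N ⟶ M) : Prop :=
  Mono f ∧ ∀ (K : C) (g : K ⟶ M), Mono g → ¬ IsZero K → ¬ IsZero (pullback f g)

/-- `i : P ⟶ E` exhibits `E` as an injective hull of `P`. -/
def IsInjectiveHull {P E : C} (i : P ⟶ E) : Prop :=
  Injective E ∧ IsEssential C i

/-- A torsion pair `(T, F)` on an abelian category: both classes are replete, all maps from
`T` to `F` vanish, and every object is an extension of an object of `F` by an object of `T`. -/
structure IsTorsionPair (T F : Set C) : Prop where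
  repleteT : ∀ X Y : C, X ∈ T → Nonempty (X ≅ Y) → Y ∈ T
  repleteF : ∀ X Y : C, X ∈ F → Nonempty (X ≅ Y) → Y ∈ F
  hom_zero : ∀ X ∈ T, ∀ Y ∈ F, ∀ f : X ⟶ Y, f = 0
  exists_ses : ∀ M : C, ∃ (X Y : C) (f : X ⟶ M) (g : M ⟶ Y),
    IsShortExact C f g ∧ X ∈ T ∧ Y ∈ F

end RosenbergSpec

namespace RosenbergSpec

variable (C : Type u) [Category.{v} C] [Abelian C]

/-- `Supp(𝒞) = ⋃_{M ∈ 𝒞} Supp(M)`. -/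
def suppSet (𝒞 : Set C) : Set (SpecPoint C) := ⋃ M ∈ 𝒞, supp C M

/-- `Supp⁻¹(S) = {M ∈ A_fg : Supp(M) ⊆ S}`. -/
def suppInv (S : Set (SpecPoint C)) : Set C :=
  {M : C | IsNoetherianObject M ∧ supp C M ⊆ S}

/-- A Serre subcategory of `A_fg` : a full replete subcategory of the finitely generated
(= noetherian) objects containing `0`, closed under subobjects, quotients and extensions. -/
structure IsSerreFG (𝒞 : Set C) : Prop where
  fg : ∀ X ∈ 𝒞, IsNoetherianObject X
  replete : ∀ X Y : C, X ∈ 𝒞 → Nonempty (X ≅ Y) → Y ∈ 𝒞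
  zero_mem : ∀ Z : C, IsZero Z → Z ∈ 𝒞
  subobject_mem : ∀ (X Y : C) (f : X ⟶ Y), Mono f → Y ∈ 𝒞 → X ∈ 𝒞
  quotient_mem : ∀ (X Y : C) (f : X ⟶ Y), Epi f → X ∈ 𝒞 → Y ∈ 𝒞
  extension_mem : ∀ (X M Y : C) (f : X ⟶ M) (g : M ⟶ Y),
    IsShortExact C f g → X ∈ 𝒞 → Y ∈ 𝒞 → M ∈ 𝒞


section Aux
set_option linter.unusedSectionVars false
set_option maxHeartbeats 1000000
variable {C}

/-- `X` is a subquotient of `Y`. -/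
def AuxSubq (X Y : C) : Prop :=
  ∃ (S : C) (i : S ⟶ Y) (p : S ⟶ X), Mono i ∧ Epi p

/-- `n`-th power. -/
noncomputable abbrev auxPow (n : ℕ) (Y : C) : C := ⨁ (fun _ : Fin n => Y)

theorem auxSubq_refl (X : C) : AuxSubq X X :=
  ⟨X, 𝟙 X, 𝟙 X, inferInstance, inferInstance⟩

theorem auxSubq_of_mono {X Y : C} (f : X ⟶ Y) (hf : Mono f) : AuxSubq X Y :=
  ⟨X, f, 𝟙 X, hf, inferInstance⟩

theorem auxSubq_of_epi {X Y : C} (f : Y ⟶ X) (hf : Epi f) : AuxSubq X Y :=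
  ⟨Y, 𝟙 Y, f, inferInstance, hf⟩

theorem auxSubq_trans {X Y Z : C} (h1 : AuxSubq X Y) (h2 : AuxSubq Y Z) : AuxSubq X Z := by
  obtain ⟨S, i, p, hi, hp⟩ := h1
  obtain ⟨T, j, q, hj, hq⟩ := h2
  haveI := hi; haveI := hp; haveI := hj; haveI := hq
  refine ⟨pullback i q, pullback.snd i q ≫ j, pullback.fst i q ≫ p, ?_, ?_⟩
  · exact mono_comp _ _
  · exact epi_comp _ _

theorem aux_mono_biproduct_map {J : Type} [Fintype J] {X Y : J → C} (f : ∀ j, X j ⟶ Y j)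
    (hf : ∀ j, Mono (f j)) : Mono (biproduct.map f) := by
  apply Preadditive.mono_of_cancel_zero
  intro P g hg
  ext j
  haveI := hf j
  have : (g ≫ biproduct.π _ j) ≫ f j = 0 := by
    rw [Category.assoc, ← biproduct.map_π f j, ← Category.assoc, hg, zero_comp]
  rw [zero_comp]
  exact zero_of_comp_mono (f j) this

theorem aux_epi_biproduct_map {J : Type} [Fintype J] {X Y : J → C} (f : ∀ j, X j ⟶ Y j)
    (hf : ∀ j, Epi (f j)) : Epi (biproduct.map f) := by
  apply Preadditive.epi_of_cancel_zero
  intro P g hg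
  ext j
  haveI := hf j
  have : f j ≫ (biproduct.ι _ j ≫ g) = 0 := by
    rw [← Category.assoc, ← biproduct.ι_map f j, Category.assoc, hg, comp_zero]
  rw [comp_zero]
  exact zero_of_epi_comp (f j) this

theorem auxSubq_pow {X Y : C} (n : ℕ) (h : AuxSubq X Y) : AuxSubq (auxPow n X) (auxPow n Y) := by
  obtain ⟨S, i, p, hi, hp⟩ := h
  exact ⟨auxPow n S, biproduct.map fun _ => i, biproduct.map fun _ => p,
    aux_mono_biproduct_map _ fun _ => hi, aux_epi_biproduct_map _ fun _ => hp⟩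

/-- `pow 1 Y ≅ Y`. -/
noncomputable def auxPowOneIso (Y : C) : auxPow 1 Y ≅ Y where
  hom := biproduct.π _ (0 : Fin 1)
  inv := biproduct.lift fun _ => 𝟙 Y
  hom_inv_id := by
    ext j
    have : (j : Fin 1) = 0 := Subsingleton.elim _ _
    simp [this]
  inv_hom_id := by simp

/-- `pow n (pow m Y) ≅ pow (n*m) Y`. -/
noncomputable def auxPowPowIso (n m : ℕ) (Y : C) : auxPow n (auxPow m Y) ≅ auxPow (n * m) Y :=
  (biproductBiproductIso (fun _ : Fin n => Fin m) (fun _ _ => Y)) ≪≫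
    biproduct.whiskerEquiv ((Equiv.sigmaEquivProd (Fin n) (Fin m)).trans finProdFinEquiv)
      (fun _ => Iso.refl Y)

theorem auxPrec_iff {X Y : C} : Prec C X Y ↔ ∃ n, 0 < n ∧ AuxSubq X (auxPow n Y) := by
  constructor
  · rintro ⟨n, hn, S, i, p, hi, hp⟩
    exact ⟨n, hn, S, i, p, hi, hp⟩
  · rintro ⟨n, hn, S, i, p, hi, hp⟩
    exact ⟨n, hn, S, i, p, hi, hp⟩

theorem auxPrec_of_subq {X Y : C} (h : AuxSubq X Y) : Prec C X Y := by
  rw [auxPrec_iff]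
  exact ⟨1, Nat.one_pos, auxSubq_trans h (auxSubq_of_mono (auxPowOneIso Y).inv inferInstance)⟩

theorem auxPrec_refl (X : C) : Prec C X X := auxPrec_of_subq (auxSubq_refl X)

theorem auxPrec_of_mono {X Y : C} (f : X ⟶ Y) (hf : Mono f) : Prec C X Y :=
  auxPrec_of_subq (auxSubq_of_mono f hf)

theorem auxPrec_of_epi {X Y : C} (f : Y ⟶ X) (hf : Epi f) : Prec C X Y :=
  auxPrec_of_subq (auxSubq_of_epi f hf)

theorem auxPrec_trans {X Y Z : C} (h1 : Prec C X Y) (h2 : Prec C Y Z) : Prec C X Z := by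
  rw [auxPrec_iff] at h1 h2 ⊢
  obtain ⟨n, hn, hs1⟩ := h1
  obtain ⟨m, hm, hs2⟩ := h2
  refine ⟨n * m, Nat.mul_pos hn hm, auxSubq_trans hs1 (auxSubq_trans (auxSubq_pow n hs2)
    (auxSubq_of_mono (auxPowPowIso n m Z).hom inferInstance))⟩


theorem aux_isZero_of_mono {X Z : C} (f : X ⟶ Z) (hf : Mono f) (hZ : IsZero Z) : IsZero X := by
  rw [IsZero.iff_id_eq_zero]
  haveI := hf
  have : 𝟙 X ≫ f = 0 ≫ f := by rw [hZ.eq_of_tgt f 0, comp_zero, comp_zero]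
  exact (cancel_mono f).1 this

theorem aux_isZero_of_epi {Z X : C} (f : Z ⟶ X) (hf : Epi f) (hZ : IsZero Z) : IsZero X := by
  rw [IsZero.iff_id_eq_zero]
  haveI := hf
  have : f ≫ 𝟙 X = f ≫ 0 := by rw [hZ.eq_of_src f 0, zero_comp, zero_comp]
  exact (cancel_epi f).1 this

theorem aux_isZero_pow {Y : C} (hY : IsZero Y) (n : ℕ) : IsZero (auxPow n Y) := by
  rw [IsZero.iff_id_eq_zero]
  ext j
  exact (hY.eq_of_tgt _ (0 : Y ⟶ Y)).trans (hY.eq_of_tgt _ (0 : Y ⟶ Y)).symm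

theorem auxPrec_isZero {X Y : C} (h : Prec C X Y) (hY : IsZero Y) : IsZero X := by
  rw [auxPrec_iff] at h
  obtain ⟨n, hn, S, i, p, hi, hp⟩ := h
  exact aux_isZero_of_epi p hp (aux_isZero_of_mono i hi (aux_isZero_pow hY n))

theorem auxPrec_of_isZero {X Y : C} (hX : IsZero X) : Prec C X Y := by
  refine auxPrec_of_subq ⟨X, 0, 𝟙 X, ⟨fun {W} g h hgh => hX.eq_of_tgt g h⟩, inferInstance⟩

theorem auxPrecEquiv_equivalence :
    Equivalence (fun P Q : SpectralObj C => PrecEquiv C P.1 Q.1) where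
  refl P := ⟨auxPrec_refl P.1, auxPrec_refl P.1⟩
  symm h := ⟨h.2, h.1⟩
  trans h1 h2 := ⟨auxPrec_trans h1.1 h2.1, auxPrec_trans h2.2 h1.2⟩

theorem aux_pt_eq_iff {P Q : SpectralObj C} :
    pt C P = pt C Q ↔ PrecEquiv C P.1 Q.1 := by
  constructor
  · intro h
    exact (auxPrecEquiv_equivalence (C := C)).eqvGen_iff.1 (Quot.eqvGen_exact h)
  · exact fun h => Quot.sound h

theorem aux_supp_subset_of_prec {M N : C} (h : Prec C M N) : supp C M ⊆ supp C N := by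
  rintro x ⟨P, hpt, hprec⟩
  exact ⟨P, hpt, auxPrec_trans hprec h⟩

theorem aux_ass_subset_supp (M : C) : ass C M ⊆ supp C M := by
  rintro x ⟨P, hpt, f, hf⟩
  exact ⟨P, hpt, auxPrec_of_mono f hf⟩

theorem aux_supp_isZero {M : C} (hM : IsZero M) : supp C M = ∅ := by
  ext x
  simp only [Set.mem_empty_iff_false, iff_false]
  rintro ⟨P, hpt, hprec⟩
  exact P.2.1 (auxPrec_isZero hprec hM)

theorem aux_spectral_sub {P Q : C} (hP : IsSpectral C P) (i : Q ⟶ P) (hi : Mono i)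
    (hQ : ¬ IsZero Q) : IsSpectral C Q ∧ PrecEquiv C Q P := by
  have hQP : PrecEquiv C Q P := hP.2 Q i hi hQ
  refine ⟨⟨hQ, ?_⟩, hQP⟩
  intro R f hf hR
  haveI := hi; haveI := hf
  have hRP : PrecEquiv C R P := hP.2 R (f ≫ i) (mono_comp f i) hR
  exact ⟨auxPrec_trans hRP.1 hQP.2, auxPrec_trans hQP.1 hRP.2⟩

theorem aux_pow_lift {X M Y : C} (f : X ⟶ M) (g : M ⟶ Y) (w : f ≫ g = 0)
    (hK : IsLimit (KernelFork.ofι f w)) {n : ℕ} {W : C} (t : W ⟶ auxPow n M)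
    (ht : t ≫ biproduct.map (fun _ : Fin n => g) = 0) :
    ∃ l : W ⟶ auxPow n X, l ≫ biproduct.map (fun _ : Fin n => f) = t := by
  have hcomp : ∀ j : Fin n, (t ≫ biproduct.π _ j) ≫ g = 0 := by
    intro j
    rw [Category.assoc, ← biproduct.map_π (fun _ : Fin n => g) j, ← Category.assoc, ht, zero_comp]
  refine ⟨biproduct.lift fun j => (KernelFork.IsLimit.lift' hK (t ≫ biproduct.π _ j)
    (hcomp j)).1, ?_⟩
  ext j
  rw [Category.assoc, biproduct.map_π, ← Category.assoc, biproduct.lift_π]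
  exact (KernelFork.IsLimit.lift' hK (t ≫ biproduct.π _ j) (hcomp j)).2

theorem aux_mono_factorThruCoimage {S T : C} (h : S ⟶ T) : Mono (Abelian.factorThruCoimage h) := by
  have : Abelian.factorThruCoimage h =
      Abelian.coimageImageComparison h ≫ Abelian.image.ι h := by
    rw [← cancel_epi (Abelian.coimage.π h), Abelian.coimage.fac,
      Abelian.coimage_image_factorisation]
  rw [this]
  exact mono_comp _ _

theorem aux_splitting {X M Y P : C} {f : X ⟶ M} {g : M ⟶ Y} (hse : IsShortExact C f g)
    (hP : IsSpectral C P) (h : Prec C P M) : Prec C P X ∨ Prec C P Y := by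
  obtain ⟨w, hSE⟩ := hse
  haveI := hSE.mono_f
  haveI := hSE.epi_g
  have hK : IsLimit (KernelFork.ofι f w) := hSE.fIsKernel
  rw [auxPrec_iff] at h
  obtain ⟨n, hn, S, ι, π, hι, hπ⟩ := h
  haveI := hι; haveI := hπ
  set F : auxPow n X ⟶ auxPow n M := biproduct.map (fun _ => f) with hF
  set G : auxPow n M ⟶ auxPow n Y := biproduct.map (fun _ => g) with hG
  haveI hFm : Mono F := aux_mono_biproduct_map _ fun _ => inferInstance
  -- K := S ∩ Xⁿ
  set K := pullback ι F with hKdef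
  have hcond : pullback.fst ι F ≫ ι = pullback.snd ι F ≫ F := pullback.condition
  by_cases hc : pullback.fst ι F ≫ π = 0
  · -- P is a subquotient of Yⁿ
    right
    set h' : S ⟶ auxPow n Y := ι ≫ G with hh'
    -- the kernel of h' maps into K
    have hkι : (kernel.ι h' ≫ ι) ≫ G = 0 := by
      rw [Category.assoc, ← hh', kernel.condition]
    obtain ⟨l, hl⟩ := aux_pow_lift f g w hK (kernel.ι h' ≫ ι) hkι
    have hv : kernel.ι h' ≫ ι = l ≫ F := hl.symm
    set v : kernel h' ⟶ K := pullback.lift (kernel.ι h') l hv with hvdef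
    have hvfst : v ≫ pullback.fst ι F = kernel.ι h' := pullback.lift_fst _ _ _
    -- π kills the kernel of h'
    have hkπ : kernel.ι h' ≫ π = 0 := by
      rw [← hvfst, Category.assoc, hc, comp_zero]
    -- the coimage of h' does the job
    set Q := Abelian.coimage h' with hQdef
    have hπbar : Abelian.coimage.π h' ≫ cokernel.desc (kernel.ι h') π hkπ = π :=
      cokernel.π_desc _ _ _
    have hepi : Epi (cokernel.desc (kernel.ι h') π hkπ) := by
      have := epi_of_epi_fac hπbar
      exact this
    rw [auxPrec_iff]
    exact ⟨n, hn, Q, Abelian.factorThruCoimage h', cokernel.desc (kernel.ι h') π hkπ,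
      aux_mono_factorThruCoimage h', hepi⟩
  · -- the image of K in P is a nonzero subobject of P
    left
    set c : K ⟶ P := pullback.fst ι F ≫ π with hcdef
    have himg : Limits.factorThruImage c ≫ Limits.image.ι c = c := Limits.image.fac c
    have hPnz : ¬ IsZero (Limits.image c) := by
      intro hz
      apply hc
      rw [← himg, hz.eq_of_tgt (Limits.factorThruImage c) 0, zero_comp]
    have hequiv : PrecEquiv C (Limits.image c) P :=
      hP.2 (Limits.image c) (Limits.image.ι c) inferInstance hPnz
    -- image c is a quotient of K which is a subobject of Xⁿ
    have h1 : Prec C (Limits.image c) X := by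
      rw [auxPrec_iff]
      exact ⟨n, hn, K, pullback.snd ι F, Limits.factorThruImage c, inferInstance, inferInstance⟩
    exact auxPrec_trans hequiv.2 h1

theorem aux_supp_extension {X M Y : C} {f : X ⟶ M} {g : M ⟶ Y} (hse : IsShortExact C f g) :
    supp C M ⊆ supp C X ∪ supp C Y := by
  rintro x ⟨P, hpt, hprec⟩
  rcases aux_splitting hse P.2 hprec with h | h
  · exact Or.inl ⟨P, hpt, h⟩
  · exact Or.inr ⟨P, hpt, h⟩

theorem aux_wf_gt_prod {β γ : Type*} [PartialOrder β] [PartialOrder γ]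
    (hb : WellFounded ((·>·) : β → β → Prop)) (hc : WellFounded ((·>·) : γ → γ → Prop)) :
    WellFounded ((·>·) : β × γ → β × γ → Prop) := by
  refine Subrelation.wf ?_ (InvImage.wf (fun p : β × γ => (p.1, p.2)) (WellFounded.prod_lex hb hc))
  rintro ⟨a₁, a₂⟩ ⟨b₁, b₂⟩ h
  have hle : (b₁, b₂) ≤ (a₁, a₂) := le_of_lt h
  have hb1 : b₁ ≤ a₁ := hle.1
  have hb2 : b₂ ≤ a₂ := hle.2
  by_cases heq : b₁ = a₁
  · subst heq
    have : b₂ < a₂ := lt_of_le_of_ne hb2 (by rintro rfl; exact lt_irrefl _ h)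
    exact Prod.Lex.right _ this
  · exact Prod.Lex.left _ _ (lt_of_le_of_ne hb1 heq)

theorem aux_wf_of_monotone {α β : Type*} [PartialOrder α] [PartialOrder β] (φ : α → β)
    (hmono : Monotone φ) (hcancel : ∀ a b, a ≤ b → φ b ≤ φ a → b ≤ a)
    (hwf : WellFounded ((·>·) : β → β → Prop)) : WellFounded ((·>·) : α → α → Prop) := by
  refine Subrelation.wf ?_ (InvImage.wf φ hwf)
  intro a b h
  have hle : φ b ≤ φ a := hmono (le_of_lt h)
  have hne : ¬ φ a ≤ φ b := fun hc => (lt_iff_le_not_ge.1 h).2 (hcancel b a (le_of_lt h) hc)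
  exact lt_of_le_not_ge hle hne

theorem aux_image_epi_comp_mono {A X Y : C} (p : A ⟶ X) (m : X ⟶ Y) (hp : Epi p) (hm : Mono m) :
    imageSubobject (p ≫ m) = Subobject.mk m := by
  haveI := hp; haveI := hm
  haveI := strongEpi_of_epi p
  have sq : CommSq (factorThruImageSubobject (p ≫ m)) p (imageSubobject (p ≫ m)).arrow m :=
    ⟨by rw [imageSubobject_arrow_comp]⟩
  refine le_antisymm (imageSubobject_le_mk m (p ≫ m) p rfl) ?_
  exact Subobject.mk_le_of_comm sq.lift sq.fac_right

theorem aux_cancel {X M Y : C} (f : X ⟶ M) (g : M ⟶ Y) (w : f ≫ g = 0)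
    (hK : IsLimit (KernelFork.ofι f w)) {A B : Subobject M} (hAB : A ≤ B)
    (h1 : Subobject.mk (pullback.snd A.arrow f) = Subobject.mk (pullback.snd B.arrow f))
    (h2 : imageSubobject (A.arrow ≫ g) = imageSubobject (B.arrow ≫ g)) : B ≤ A := by
  haveI : Mono f := mono_of_isLimit_fork hK
  have hepi : Epi (Subobject.ofLE A B hAB) := by
    rw [epi_iff_surjective_up_to_refinements]
    intro T y
    -- transfer the image equality into a morphism
    set σ : (imageSubobject (B.arrow ≫ g) : C) ⟶ (imageSubobject (A.arrow ≫ g) : C) :=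
      Subobject.ofLE _ _ (le_of_eq h2.symm) with hσ
    have hσa : σ ≫ (imageSubobject (A.arrow ≫ g)).arrow =
        (imageSubobject (B.arrow ≫ g)).arrow := Subobject.ofLE_arrow _
    obtain ⟨T₁, π₁, hπ₁, a₀, fac₀⟩ := surjective_up_to_refinements_of_epi
      (factorThruImageSubobject (A.arrow ≫ g))
      (y ≫ factorThruImageSubobject (B.arrow ≫ g) ≫ σ)
    have key : a₀ ≫ A.arrow ≫ g = π₁ ≫ y ≫ B.arrow ≫ g := by
      have := congrArg (fun t => t ≫ (imageSubobject (A.arrow ≫ g)).arrow) fac₀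
      simp only [Category.assoc, hσa, imageSubobject_arrow_comp] at this
      exact this.symm
    set z : T₁ ⟶ M := π₁ ≫ y ≫ B.arrow - a₀ ≫ A.arrow with hz
    have hzg : z ≫ g = 0 := by
      rw [hz, Preadditive.sub_comp]
      simp only [Category.assoc]
      rw [← key]
      simp
    obtain ⟨l, hl⟩ := KernelFork.IsLimit.lift' hK z hzg
    dsimp at hl
    set u : T₁ ⟶ (B : C) := π₁ ≫ y - a₀ ≫ Subobject.ofLE A B hAB with hu
    have huB : u ≫ B.arrow = z := by
      rw [hu, Preadditive.sub_comp, hz]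
      simp only [Category.assoc, Subobject.ofLE_arrow]
    set s : T₁ ⟶ pullback B.arrow f := pullback.lift u l (by rw [huB, hl]) with hs
    set τ : pullback B.arrow f ⟶ pullback A.arrow f :=
      Subobject.ofMkLEMk _ _ (le_of_eq h1.symm) with hτ
    have hτsnd : τ ≫ pullback.snd A.arrow f = pullback.snd B.arrow f :=
      Subobject.ofMkLEMk_comp _
    set a₁ : T₁ ⟶ (A : C) := s ≫ τ ≫ pullback.fst A.arrow f with ha₁
    have ha₁A : a₁ ≫ A.arrow = z := by
      rw [ha₁]
      simp only [Category.assoc]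
      rw [pullback.condition, ← Category.assoc τ, hτsnd, ← Category.assoc,
        pullback.lift_snd, hl]
    refine ⟨T₁, π₁, hπ₁, a₀ + a₁, ?_⟩
    rw [← cancel_mono B.arrow]
    simp only [Category.assoc, Subobject.ofLE_arrow, Preadditive.add_comp, ha₁A, hz]
    abel
  have hiso : IsIso (Subobject.ofLE A B hAB) :=
    @isIso_of_mono_of_epi _ _ _ _ _ _ inferInstance hepi
  exact Subobject.le_of_comm (inv (Subobject.ofLE A B hAB))
    (by rw [IsIso.inv_comp_eq, Subobject.ofLE_arrow])

theorem aux_noeth_wf (M : C) [IsNoetherianObject M] :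
    WellFounded ((·>·) : Subobject M → Subobject M → Prop) := wellFounded_gt

theorem aux_noeth_mk {M : C} (h : WellFounded ((·>·) : Subobject M → Subobject M → Prop)) :
    IsNoetherianObject M := by
  exact ⟨⟨h⟩⟩

theorem aux_noeth_of_mono {N M : C} (h : N ⟶ M) (hm : Mono h) (hM : IsNoetherianObject M) :
    IsNoetherianObject N := by
  haveI := hm
  refine aux_noeth_mk ?_
  refine aux_wf_of_monotone (fun A : Subobject N => Subobject.mk (A.arrow ≫ h)) ?_ ?_
    (aux_noeth_wf M)
  · intro A B hAB
    exact Subobject.mk_le_mk_of_comm (Subobject.ofLE A B hAB)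
      (by rw [← Category.assoc, Subobject.ofLE_arrow])
  · intro A B hAB hBA
    refine Subobject.le_of_comm (Subobject.ofMkLEMk _ _ hBA) ?_
    have := Subobject.ofMkLEMk_comp hBA
    rw [← Category.assoc] at this
    exact (cancel_mono h).1 this

theorem aux_noeth_of_epi {M N : C} (e : M ⟶ N) (he : Epi e) (hM : IsNoetherianObject M) :
    IsNoetherianObject N := by
  haveI := he
  have hE : ∀ A : Subobject N,
      imageSubobject ((Subobject.mk (pullback.snd A.arrow e)).arrow ≫ e) = A := by
    intro A
    rw [← Subobject.underlyingIso_hom_comp_eq_mk, Category.assoc,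
      imageSubobject_iso_comp, ← pullback.condition,
      aux_image_epi_comp_mono _ _ inferInstance inferInstance, Subobject.mk_arrow]
  refine aux_noeth_mk ?_
  refine aux_wf_of_monotone (fun A : Subobject N => Subobject.mk (pullback.snd A.arrow e)) ?_ ?_
    (aux_noeth_wf M)
  · intro A B hAB
    refine Subobject.mk_le_mk_of_comm
      (pullback.lift (pullback.fst A.arrow e ≫ Subobject.ofLE A B hAB) (pullback.snd A.arrow e)
        (by rw [Category.assoc, Subobject.ofLE_arrow, pullback.condition])) ?_
    rw [pullback.lift_snd]
  · intro A B hAB hBA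
    have hmono : ∀ {S T : Subobject M}, S ≤ T →
        imageSubobject (S.arrow ≫ e) ≤ imageSubobject (T.arrow ≫ e) := by
      intro S T hST
      rw [← Subobject.ofLE_arrow hST, Category.assoc]
      exact imageSubobject_comp_le _ _
    have := hmono hBA
    rwa [hE A, hE B] at this

theorem aux_noeth_of_iso {X Y : C} (e : X ≅ Y) (hX : IsNoetherianObject X) : IsNoetherianObject Y :=
  aux_noeth_of_mono e.inv inferInstance hX

theorem aux_noeth_of_isZero {Z : C} (h : IsZero Z) : IsNoetherianObject Z := by
  have hle : ∀ A B : Subobject Z, A ≤ B := by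
    intro A B
    refine Subobject.le_of_comm 0 ?_
    rw [zero_comp]
    exact (h.eq_of_tgt 0 A.arrow)
  refine aux_noeth_mk ?_
  constructor
  intro a
  constructor
  intro b hb
  exact absurd (hle b a) (lt_iff_le_not_ge.1 hb).2

theorem aux_noeth_ext {X M Y : C} {f : X ⟶ M} {g : M ⟶ Y} (hse : IsShortExact C f g)
    (hX : IsNoetherianObject X) (hY : IsNoetherianObject Y) : IsNoetherianObject M := by
  obtain ⟨w, hSE⟩ := hse
  haveI := hSE.mono_f
  have hK : IsLimit (KernelFork.ofι f w) := hSE.fIsKernel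
  refine aux_noeth_mk ?_
  refine aux_wf_of_monotone
    (fun A : Subobject M =>
      ((Subobject.mk (pullback.snd A.arrow f) : Subobject X),
        (imageSubobject (A.arrow ≫ g) : Subobject Y)))
    ?_ ?_ (aux_wf_gt_prod (aux_noeth_wf X)
      (aux_noeth_wf Y))
  · intro A B hAB
    constructor
    all_goals dsimp only
    · refine Subobject.mk_le_mk_of_comm
        (pullback.lift (pullback.fst A.arrow f ≫ Subobject.ofLE A B hAB) (pullback.snd A.arrow f)
          (by rw [Category.assoc, Subobject.ofLE_arrow, pullback.condition])) ?_
      rw [pullback.lift_snd]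
    · rw [← Subobject.ofLE_arrow hAB, Category.assoc]
      exact imageSubobject_comp_le _ _
  · intro A B hAB hBA
    refine aux_cancel f g w hK hAB ?_ ?_
    · refine le_antisymm ?_ hBA.1
      refine Subobject.mk_le_mk_of_comm
        (pullback.lift (pullback.fst A.arrow f ≫ Subobject.ofLE A B hAB) (pullback.snd A.arrow f)
          (by rw [Category.assoc, Subobject.ofLE_arrow, pullback.condition])) ?_
      rw [pullback.lift_snd]
    · refine le_antisymm ?_ hBA.2
      rw [← Subobject.ofLE_arrow hAB, Category.assoc]
      exact imageSubobject_comp_le _ _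

theorem aux_pow_shortExact (n : ℕ) (Y : C) :
    IsShortExact C (biproduct.ι (fun _ : Fin (n+1) => Y) 0)
      (biproduct.lift (fun i : Fin n => biproduct.π (fun _ : Fin (n+1) => Y) i.succ)) := by
  set g : auxPow (n+1) Y ⟶ auxPow n Y :=
    biproduct.lift (fun i : Fin n => biproduct.π (fun _ : Fin (n+1) => Y) i.succ) with hg
  set s : auxPow n Y ⟶ auxPow (n+1) Y :=
    biproduct.desc (fun i : Fin n => biproduct.ι (fun _ : Fin (n+1) => Y) i.succ) with hs
  have w : biproduct.ι (fun _ : Fin (n+1) => Y) 0 ≫ g = 0 := by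
    ext j
    rw [hg, Category.assoc, biproduct.lift_π, biproduct.ι_π_ne _ (Fin.succ_ne_zero j).symm,
      zero_comp]
  have hgsucc : ∀ k : Fin n, biproduct.ι (fun _ : Fin (n+1) => Y) k.succ ≫ g =
      biproduct.ι (fun _ : Fin n => Y) k := by
    intro k
    ext j
    rw [hg, Category.assoc, biproduct.lift_π, biproduct.ι_π, biproduct.ι_π]
    by_cases h : k = j
    · subst h; simp
    · rw [dif_neg h, dif_neg (fun hc => h (Fin.succ_injective n hc))]
  refine ⟨w, ShortComplex.Splitting.shortExact
    { r := biproduct.π (fun _ : Fin (n+1) => Y) 0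
      s := s
      f_r := by simp
      s_g := ?_
      id := ?_ }⟩
  · show s ≫ g = 𝟙 (auxPow n Y)
    apply biproduct.hom_ext'
    intro j
    rw [← Category.assoc, hs, biproduct.ι_desc, hgsucc, Category.comp_id]
  · show biproduct.π (fun _ : Fin (n+1) => Y) 0 ≫ biproduct.ι (fun _ : Fin (n+1) => Y) 0 +
      g ≫ s = 𝟙 (auxPow (n+1) Y)
    apply biproduct.hom_ext'
    intro i
    simp only [Preadditive.comp_add, Category.comp_id]
    induction i using Fin.cases with
    | zero =>
      rw [← Category.assoc, biproduct.ι_π_self, Category.id_comp, ← Category.assoc, w,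
        zero_comp, add_zero]
    | succ k =>
      rw [← Category.assoc, biproduct.ι_π_ne _ (Fin.succ_ne_zero k), zero_comp, zero_add,
        ← Category.assoc, hgsucc, hs, biproduct.ι_desc]

theorem aux_isZero_pow_zero (Y : C) : IsZero (auxPow 0 Y) := by
  rw [IsZero.iff_id_eq_zero]
  apply biproduct.hom_ext
  exact fun j => j.elim0

theorem aux_noeth_pow {Y : C} (hY : IsNoetherianObject Y) (n : ℕ) :
    IsNoetherianObject (auxPow n Y) := by
  induction n with
  | zero => exact aux_noeth_of_isZero (aux_isZero_pow_zero Y)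
  | succ n ih => exact aux_noeth_ext (aux_pow_shortExact n Y) hY ih

theorem aux_serre_pow {𝒞 : Set C} (h𝒞 : IsSerreFG C 𝒞) {Y : C} (hY : Y ∈ 𝒞) (n : ℕ) :
    auxPow n Y ∈ 𝒞 := by
  induction n with
  | zero => exact h𝒞.zero_mem _ (aux_isZero_pow_zero Y)
  | succ n ih =>
    exact h𝒞.extension_mem Y (auxPow (n+1) Y) (auxPow n Y) _ _ (aux_pow_shortExact n Y) hY ih

theorem aux_serre_prec {𝒞 : Set C} (h𝒞 : IsSerreFG C 𝒞) {X N : C} (h : Prec C X N)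
    (hN : N ∈ 𝒞) : X ∈ 𝒞 := by
  rw [auxPrec_iff] at h
  obtain ⟨n, hn, S, i, p, hi, hp⟩ := h
  exact h𝒞.quotient_mem S X p hp (h𝒞.subobject_mem S (auxPow n N) i hi (aux_serre_pow h𝒞 hN n))

theorem aux_exists_noeth_sub (hln : LocallyNoetherian C) {M : C} (hM : ¬ IsZero M) :
    ∃ (N : C) (i : N ⟶ M), Mono i ∧ ¬ IsZero N ∧ IsNoetherianObject N := by
  obtain ⟨κ, G, hsep, hnoeth⟩ := hln
  have hex : ∃ (i : κ) (h : G i ⟶ M), h ≠ 0 := by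
    by_contra hno
    push_neg at hno
    apply hM
    rw [IsZero.iff_id_eq_zero]
    apply hsep (𝟙 M) 0
    rintro G' ⟨i, rfl⟩ h
    rw [hno i h, zero_comp, zero_comp]
  obtain ⟨i, h, hne⟩ := hex
  refine ⟨Abelian.image h, Abelian.image.ι h, inferInstance, ?_, ?_⟩
  · intro hz
    apply hne
    rw [← Abelian.image.fac h, hz.eq_of_tgt (Abelian.factorThruImage h) 0, zero_comp]
  · exact aux_noeth_of_epi (Abelian.factorThruImage h) inferInstance (hnoeth i)

theorem aux_devissage {𝒞 : Set C} (h𝒞 : IsSerreFG C 𝒞) (hass : HasAssociatedPoints C)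
    {M : C} (hM : IsNoetherianObject M) (hsupp : supp C M ⊆ suppSet C 𝒞) : M ∈ 𝒞 := by
  have hbot : ((⊥ : Subobject M) : C) ∈ 𝒞 :=
    h𝒞.zero_mem _ (IsZero.of_iso (isZero_zero C) Subobject.botCoeIsoZero)
  obtain ⟨T, hT, hmax⟩ := (aux_noeth_wf M).has_min
    {T : Subobject M | ((T : C)) ∈ 𝒞} ⟨⊥, hbot⟩
  by_cases hzero : IsZero (cokernel T.arrow)
  · -- T = M
    haveI : Epi T.arrow := by
      apply Preadditive.epi_of_cancel_zero
      intro R k hk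
      have : cokernel.desc T.arrow k hk = 0 := hzero.eq_of_src _ _
      rw [← cokernel.π_desc T.arrow k hk, this, comp_zero]
    haveI : IsIso T.arrow := isIso_of_mono_of_epi _
    exact h𝒞.replete _ M hT ⟨asIso T.arrow⟩
  · exfalso
    obtain ⟨x, Q, hptQ, u, hu⟩ := hass _ hzero
    haveI := hu
    have hQM : Prec C Q.1 M :=
      auxPrec_trans (auxPrec_of_mono u hu) (auxPrec_of_epi (cokernel.π T.arrow) inferInstance)
    have hxsupp : x ∈ supp C M := ⟨Q, hptQ, hQM⟩
    have := hsupp hxsupp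
    simp only [suppSet, Set.mem_iUnion] at this
    obtain ⟨N, hN, Q', hptQ', hprecQ'⟩ := this
    have hequiv : PrecEquiv C Q'.1 Q.1 := aux_pt_eq_iff.1 (hptQ'.trans hptQ.symm)
    have hQ𝒞 : Q.1 ∈ 𝒞 := aux_serre_prec h𝒞 (auxPrec_trans hequiv.2 hprecQ') hN
    -- build the preimage T' of Q in M
    set π : M ⟶ cokernel T.arrow := cokernel.π T.arrow with hπ
    set T' := pullback u π with hT'
    set k : (T : C) ⟶ T' := pullback.lift 0 T.arrow (by rw [zero_comp, cokernel.condition]) with hk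
    have hkfst : k ≫ pullback.fst u π = 0 := pullback.lift_fst _ _ _
    have hksnd : k ≫ pullback.snd u π = T.arrow := pullback.lift_snd _ _ _
    haveI : Mono k := mono_of_mono_fac hksnd
    have hse : IsShortExact C k (pullback.fst u π) := by
      refine ⟨hkfst, ShortComplex.ShortExact.mk' ?_ inferInstance inferInstance⟩
      apply ShortComplex.exact_of_f_is_kernel
      refine KernelFork.IsLimit.ofι' k hkfst ?_
      intro W t ht
      have htπ : (t ≫ pullback.snd u π) ≫ π = 0 := by
        rw [Category.assoc, ← pullback.condition, ← Category.assoc, ht, zero_comp]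
      refine ⟨Abelian.monoLift T.arrow (t ≫ pullback.snd u π) htπ, ?_⟩
      apply pullback.hom_ext
      · rw [Category.assoc, hkfst, comp_zero, ht]
      · rw [Category.assoc, hksnd, Abelian.monoLift_comp]
    have hT'𝒞 : T' ∈ 𝒞 := h𝒞.extension_mem (T : C) T' Q.1 k (pullback.fst u π) hse hT hQ𝒞
    have hT''𝒞 : ((Subobject.mk (pullback.snd u π) : Subobject M) : C) ∈ 𝒞 :=
      h𝒞.replete T' _ hT'𝒞 ⟨(Subobject.underlyingIso (pullback.snd u π)).symm⟩
    have hle : T ≤ Subobject.mk (pullback.snd u π) := Subobject.le_mk_of_comm k hksnd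
    have hne : T ≠ Subobject.mk (pullback.snd u π) := by
      intro heq
      set φ : T' ⟶ (T : C) :=
        (Subobject.underlyingIso (pullback.snd u π)).inv ≫
          Subobject.ofLE _ _ (le_of_eq heq.symm) with hφ
      have hφa : φ ≫ T.arrow = pullback.snd u π := by
        rw [hφ, Category.assoc, Subobject.ofLE_arrow, Subobject.underlyingIso_arrow]
      have h0 : pullback.fst u π ≫ u = 0 := by
        rw [pullback.condition, ← hφa, Category.assoc, cokernel.condition, comp_zero]
      apply Q.2.1
      rw [IsZero.iff_id_eq_zero]
      have heq2 : pullback.fst u π ≫ (𝟙 Q.1) ≫ u = pullback.fst u π ≫ 0 ≫ u := by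
        rw [Category.id_comp, h0, zero_comp, comp_zero]
      have heq3 := (cancel_epi (pullback.fst u π)).1 heq2
      exact (cancel_mono u).1 heq3
    exact hmax _ hT''𝒞 (lt_of_le_of_ne hle hne)
end Aux

/-- For a locally noetherian Grothendieck category in which every nonzero
object has an associated point, `Supp` and `Supp⁻¹` are mutually inverse bijections between
Serre subcategories of `A_fg` and specialization closed subsets of `𝔖pec(A)`. -/
theorem serre_biject_specialization_closed
    [HasColimits C] [AB5 C]
    (hln : LocallyNoetherian C) (hass : HasAssociatedPoints C) :
    (∀ 𝒞 : Set C, IsSerreFG C 𝒞 →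
      SpecializationClosed C (suppSet C 𝒞) ∧ suppInv C (suppSet C 𝒞) = 𝒞) ∧
    (∀ S : Set (SpecPoint C), SpecializationClosed C S →
      IsSerreFG C (suppInv C S) ∧ suppSet C (suppInv C S) = S) := by
  constructor
  · intro 𝒞 h𝒞
    constructor
    · -- `Supp 𝒞` is specialization closed
      intro P hP x hx
      simp only [suppSet, Set.mem_iUnion] at hP ⊢
      obtain ⟨N, hN, P', hptP', hprecP'⟩ := hP
      obtain ⟨Q, hptQ, hprecQ⟩ := hx
      have hPP' : PrecEquiv C P.1 P'.1 := aux_pt_eq_iff.1 (hptP'.symm)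
      exact ⟨N, hN, Q, hptQ, auxPrec_trans hprecQ (auxPrec_trans hPP'.1 hprecP')⟩
    · -- `Supp⁻¹ (Supp 𝒞) = 𝒞`
      ext M
      constructor
      · rintro ⟨hnoeth, hsub⟩
        exact aux_devissage h𝒞 hass hnoeth hsub
      · intro hM
        exact ⟨h𝒞.fg M hM, fun x hx => Set.mem_biUnion hM hx⟩
  · intro S hS
    constructor
    · -- `Supp⁻¹ S` is a Serre subcategory
      refine ⟨fun X hX => hX.1, ?_, ?_, ?_, ?_, ?_⟩
      · rintro X Y hX ⟨e⟩
        refine ⟨aux_noeth_of_iso e hX.1, ?_⟩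
        exact (aux_supp_subset_of_prec (auxPrec_of_mono e.inv inferInstance)).trans hX.2
      · intro Z hZ
        refine ⟨aux_noeth_of_isZero hZ, ?_⟩
        rw [aux_supp_isZero hZ]
        exact Set.empty_subset S
      · intro X Y f hf hY
        exact ⟨aux_noeth_of_mono f hf hY.1,
          (aux_supp_subset_of_prec (auxPrec_of_mono f hf)).trans hY.2⟩
      · intro X Y f hf hX
        exact ⟨aux_noeth_of_epi f hf hX.1,
          (aux_supp_subset_of_prec (auxPrec_of_epi f hf)).trans hX.2⟩
      · intro X M Y f g hse hX hY
        refine ⟨aux_noeth_ext hse hX.1 hY.1, (aux_supp_extension hse).trans ?_⟩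
        exact Set.union_subset hX.2 hY.2
    · -- `Supp (Supp⁻¹ S) = S`
      ext x
      constructor
      · intro hx
        simp only [suppSet, Set.mem_iUnion] at hx
        obtain ⟨M, hM, hxM⟩ := hx
        exact hM.2 hxM
      · intro hx
        obtain ⟨P, rfl⟩ := Quot.exists_rep x
        have hPnz := P.2.1
        obtain ⟨N, i, hi, hNnz, hNnoeth⟩ := aux_exists_noeth_sub hln hPnz
        obtain ⟨hNspec, hequiv⟩ := aux_spectral_sub P.2 i hi hNnz
        have hsuppN : supp C N ⊆ S := fun y hy =>
          hS P hx (aux_supp_subset_of_prec (auxPrec_of_mono i hi) hy)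
        have hmem : N ∈ suppInv C S := ⟨hNnoeth, hsuppN⟩
        refine Set.mem_biUnion hmem ?_
        exact ⟨⟨N, hNspec⟩, Quot.sound hequiv, auxPrec_refl N⟩

end RosenbergSpec
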